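/- Let X be a type and M a submonoid of Function.End X, equipped with the pointwise topology. Then (M, pointwise topology) is a left powder monoid: it is a T₀ topological monoid, the sets [j]_s = {k ∈ M : ∀ x ∈ s, k x = j x} (for j ∈ M, s ⊆ X finite) form a basis of clopen sets, and for every such basic set U and every p ∈ M the set I^U_p = {q ∈ M : ∀ r ∈ M, (r * q ∈ U ↔ r * p ∈ U)} is open. -/

import Mathlib

/-- The pointwise (product of discrete) topology on `Function.End X`. -/
def endTopology (X : Type*) : TopologicalSpace (Function.End X) :=
  @Pi.topologicalSpace X (fun _ => X) (fun _ => ⊥)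

/-- The pointwise topology on a submonoid of `Function.End X`. -/
def subTopology {X : Type*} (M : Submonoid (Function.End X)) : TopologicalSpace M :=
  (endTopology X).induced Subtype.val

/-- Any submonoid of `Function.End X` with the pointwise topology is a left powder
monoid: it is a T₀ topological monoid, the sets `[j]_s = {k | ∀ x ∈ s, k x = j x}`
form a basis of clopen sets, and for each such basic set `U` and each `p` the set
`I^U_p = {q | ∀ r, r * q ∈ U ↔ r * p ∈ U}` is open. -/
theorem submonoid_of_end_is_left_powder (X : Type*) (M : Submonoid (Function.End X)) :
    letI := subTopology M
    T0Space M ∧ Continuous (fun p : M × M => p.1 * p.2) ∧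
      TopologicalSpace.IsTopologicalBasis
        {U : Set M | ∃ (j : M) (s : Finset X),
          U = {k : M | ∀ x ∈ s, (k : Function.End X) x = (j : Function.End X) x}} ∧
      (∀ (j : M) (s : Finset X),
        IsClopen {k : M | ∀ x ∈ s, (k : Function.End X) x = (j : Function.End X) x}) ∧
      (∀ (j : M) (s : Finset X) (p : M),
        IsOpen {q : M | ∀ r : M,
          (r * q ∈ {k : M | ∀ x ∈ s, (k : Function.End X) x = (j : Function.End X) x}) ↔
          (r * p ∈ {k : M | ∀ x ∈ s, (k : Function.End X) x = (j : Function.End X) x})}) := by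
  letI : TopologicalSpace X := ⊥
  haveI : DiscreteTopology X := ⟨rfl⟩
  letI tE : TopologicalSpace (Function.End X) := endTopology X
  letI tM : TopologicalSpace M := subTopology M
  have hval : Continuous (fun k : M => (k : Function.End X)) := continuous_induced_dom
  have heval : ∀ x : X, Continuous (fun k : M => (k : Function.End X) x) := fun x =>
    (continuous_apply (A := fun _ : X => X) x).comp hval
  have hopen : ∀ (x c : X), IsOpen {k : M | (k : Function.End X) x = c} := fun x c =>
    (heval x).isOpen_preimage {c} (isOpen_discrete _)
  have hclopen : ∀ (x c : X), IsClopen {k : M | (k : Function.End X) x = c} := fun x c =>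
    ⟨(isClosed_discrete {c}).preimage (heval x), hopen x c⟩
  have hbasic : ∀ (j : M) (s : Finset X),
      IsClopen {k : M | ∀ x ∈ s, (k : Function.End X) x = (j : Function.End X) x} := by
    intro j s
    have : {k : M | ∀ x ∈ s, (k : Function.End X) x = (j : Function.End X) x}
        = ⋂ x ∈ s, {k : M | (k : Function.End X) x = (j : Function.End X) x} := by
      ext k; simp
    rw [this]
    exact isClopen_biInter_finset (fun x _ => hclopen x _)
  refine ⟨?_, ?_, ?_, hbasic, ?_⟩
  · -- T0
    haveI : T0Space (Function.End X) := by
      exact Pi.instT0Space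
    have hemb : Topology.IsEmbedding (fun k : M => (k : Function.End X)) := ⟨⟨rfl⟩, Subtype.val_injective⟩
    exact hemb.t0Space
  · -- continuity of mul
    apply continuous_induced_rng.2
    apply continuous_pi
    intro x
    rw [continuous_discrete_rng]
    intro c
    have : (fun p : M × M => ((p.1 * p.2 : M) : Function.End X) x) ⁻¹' {c}
        = ⋃ y : X, ({k : M | (k : Function.End X) y = c} ×ˢ
            {k : M | (k : Function.End X) x = y}) := by
      ext p
      simp only [Set.mem_preimage, Set.mem_singleton_iff, Set.mem_iUnion, Set.mem_prod,
        Set.mem_setOf_eq]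
      constructor
      · intro h; exact ⟨(p.2 : Function.End X) x, h, rfl⟩
      · rintro ⟨y, h1, h2⟩
        show (p.1 : Function.End X) ((p.2 : Function.End X) x) = c
        rw [h2]; exact h1
    show IsOpen ((fun p : M × M => ((p.1 * p.2 : M) : Function.End X) x) ⁻¹' {c})
    rw [this]
    exact isOpen_iUnion (fun y => (hopen y c).prod (hopen x y))
  · -- basis
    apply TopologicalSpace.isTopologicalBasis_of_isOpen_of_nhds
    · rintro U ⟨j, s, rfl⟩
      exact (hbasic j s).2
    · intro a u ha hu
      rw [subTopology, isOpen_induced_iff] at hu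
      obtain ⟨t, ht, rfl⟩ := hu
      replace ht := isOpen_pi_iff.1 (show @IsOpen (X → X) _ t from ht)
      obtain ⟨I, v, hv, hsub⟩ := ht (a : Function.End X) ha
      refine ⟨{k : M | ∀ x ∈ I, (k : Function.End X) x = (a : Function.End X) x},
        ⟨a, I, rfl⟩, fun x _ => rfl, ?_⟩
      intro k hk
      apply hsub
      intro i hi
      rw [Set.mem_setOf_eq] at hk
      rw [hk i hi]
      exact (hv i hi).2
  · -- I^U_p open
    intro j s p
    rw [isOpen_iff_forall_mem_open]
    intro q hq
    refine ⟨{k : M | ∀ x ∈ s, (k : Function.End X) x = (q : Function.End X) x}, ?_,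
      (hbasic q s).2, fun x _ => rfl⟩
    intro q' hq'
    intro r
    have key : ∀ x ∈ s, ((r * q' : M) : Function.End X) x = ((r * q : M) : Function.End X) x := by
      intro x hx
      show (r : Function.End X) ((q' : Function.End X) x) = (r : Function.End X) ((q : Function.End X) x)
      rw [hq' x hx]
    constructor
    · intro h
      apply (hq r).1
      intro x hx; rw [← key x hx]; exact h x hx
    · intro h
      have := (hq r).2 h
      intro x hx; rw [key x hx]; exact this x hx
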